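/- (Necessary condition for Δeq.opp. = 0 solvability.) With p_y⁺, p_y⁻ > 0, Σ_y(p_y⁺+p_y⁻)=1, C_y⁺, C_y⁻ ∈ [0,1), α_y = p_y⁺/(1−C_y⁺) + p_y⁻/(1−C_y⁻), p⁺ = Σ_y p_y⁺, p⁻ = Σ_y p_y⁻: if there exist λ_y with λ_y ≤ (1−C_y⁺)/p_D, λ_y ≤ (1−C_y⁻)/p_D, and Σ_y α_yλ_y = (1−p_D)/p_D, then p_D ≥ p⁻·min_y (C_y⁺ − C_y⁻)/(1−C_y⁻) and p_D ≥ p⁺·min_y (C_y⁻ − C_y⁺)/(1−C_y⁺). -/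
import Mathlib


open scoped BigOperators

lemma stmt_16_aux {K : ℕ} [NeZero K] (pD : ℝ) (hpD : pD ∈ Set.Ioo (0:ℝ) 1)
    (pp pm : Fin K → ℝ) (hpp : ∀ y, 0 < pp y) (hpm : ∀ y, 0 < pm y)
    (hsum : ∑ y, (pp y + pm y) = 1)
    (Cp Cm : Fin K → ℝ)
    (hCp : ∀ y, Cp y ∈ Set.Ico (0:ℝ) 1) (hCm : ∀ y, Cm y ∈ Set.Ico (0:ℝ) 1)
    (l : Fin K → ℝ)
    (hl1 : ∀ y, l y ≤ (1 - Cp y) / pD)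
    (hleq : ∑ y, (pp y / (1 - Cp y) + pm y / (1 - Cm y)) * l y = (1 - pD) / pD) :
    pD ≥ (∑ y, pm y)
        * Finset.univ.inf' Finset.univ_nonempty (fun y => (Cp y - Cm y) / (1 - Cm y)) := by
  obtain ⟨hpD0, hpD1⟩ := hpD
  set m := Finset.univ.inf' Finset.univ_nonempty (fun y => (Cp y - Cm y) / (1 - Cm y)) with hmdef
  have hm : ∀ y : Fin K, m ≤ (Cp y - Cm y) / (1 - Cm y) := fun y =>
    Finset.inf'_le _ (Finset.mem_univ y)
  have hCp' : ∀ y, (0:ℝ) < 1 - Cp y := fun y => by have := (hCp y).2; linarith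
  have hCm' : ∀ y, (0:ℝ) < 1 - Cm y := fun y => by have := (hCm y).2; linarith
  -- pointwise bound
  have h1 : ∀ y : Fin K, pD * ((pp y / (1 - Cp y) + pm y / (1 - Cm y)) * l y)
      ≤ pp y + pm y * ((1 - Cp y) / (1 - Cm y)) := by
    intro y
    have hlb : pD * l y ≤ 1 - Cp y := by
      have := hl1 y
      rw [le_div_iff₀ hpD0] at this
      linarith [this]
    have h2 : pp y / (1 - Cp y) * (pD * l y) ≤ pp y / (1 - Cp y) * (1 - Cp y) :=
      mul_le_mul_of_nonneg_left hlb (div_nonneg (hpp y).le (hCp' y).le)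
    have h3 : pm y / (1 - Cm y) * (pD * l y) ≤ pm y / (1 - Cm y) * (1 - Cp y) :=
      mul_le_mul_of_nonneg_left hlb (div_nonneg (hpm y).le (hCm' y).le)
    have e1 : pp y / (1 - Cp y) * (1 - Cp y) = pp y :=
      div_mul_cancel₀ _ (hCp' y).ne'
    have e2 : pm y / (1 - Cm y) * (1 - Cp y) = pm y * ((1 - Cp y) / (1 - Cm y)) := by
      rw [div_mul_eq_mul_div, mul_div_assoc]
    nlinarith [h2, h3]
  have hsum1 : 1 - pD = ∑ y, pD * ((pp y / (1 - Cp y) + pm y / (1 - Cm y)) * l y) := by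
    rw [← Finset.mul_sum, hleq]
    field_simp
  have hsum2 : 1 - pD ≤ ∑ y, (pp y + pm y * ((1 - Cp y) / (1 - Cm y))) := by
    rw [hsum1]
    exact Finset.sum_le_sum fun y _ => h1 y
  have hrw : ∀ y : Fin K, pm y * ((1 - Cp y) / (1 - Cm y))
      = pm y - pm y * ((Cp y - Cm y) / (1 - Cm y)) := by
    intro y
    have := (hCm' y).ne'
    field_simp
    ring
  have hsum3 : ∑ y, (pp y + pm y * ((1 - Cp y) / (1 - Cm y)))
      = 1 - ∑ y, pm y * ((Cp y - Cm y) / (1 - Cm y)) := by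
    simp_rw [hrw]
    have : ∑ y, (pp y + (pm y - pm y * ((Cp y - Cm y) / (1 - Cm y))))
        = ∑ y, (pp y + pm y) - ∑ y, pm y * ((Cp y - Cm y) / (1 - Cm y)) := by
      rw [← Finset.sum_sub_distrib]
      exact Finset.sum_congr rfl fun y _ => by ring
    rw [this, hsum]
  have hsum4 : (∑ y, pm y) * m ≤ ∑ y, pm y * ((Cp y - Cm y) / (1 - Cm y)) := by
    rw [Finset.sum_mul]
    exact Finset.sum_le_sum fun y _ => mul_le_mul_of_nonneg_left (hm y) (hpm y).le
  linarith [hsum2, hsum3 ▸ hsum2, hsum4]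

/-- necessary condition for solvability of `Δeq.opp. = 0`. -/
theorem stmt_16 {K : ℕ} [NeZero K] (pD : ℝ) (hpD : pD ∈ Set.Ioo (0:ℝ) 1)
    (pp pm : Fin K → ℝ) (hpp : ∀ y, 0 < pp y) (hpm : ∀ y, 0 < pm y)
    (hsum : ∑ y, (pp y + pm y) = 1)
    (Cp Cm : Fin K → ℝ)
    (hCp : ∀ y, Cp y ∈ Set.Ico (0:ℝ) 1) (hCm : ∀ y, Cm y ∈ Set.Ico (0:ℝ) 1)
    (α : Fin K → ℝ) (hα : α = fun y => pp y / (1 - Cp y) + pm y / (1 - Cm y))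
    (l : Fin K → ℝ)
    (hl1 : ∀ y, l y ≤ (1 - Cp y) / pD) (hl2 : ∀ y, l y ≤ (1 - Cm y) / pD)
    (hleq : ∑ y, α y * l y = (1 - pD) / pD) :
    pD ≥ (∑ y, pm y)
        * Finset.univ.inf' Finset.univ_nonempty (fun y => (Cp y - Cm y) / (1 - Cm y)) ∧
    pD ≥ (∑ y, pp y)
        * Finset.univ.inf' Finset.univ_nonempty (fun y => (Cm y - Cp y) / (1 - Cp y)) := by
  subst hα
  constructor
  · exact stmt_16_aux pD hpD pp pm hpp hpm hsum Cp Cm hCp hCm l hl1 hleq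
  · have hsum' : ∑ y, (pm y + pp y) = 1 := by rw [← hsum]; simp_rw [add_comm]
    have hleq' : ∑ y, (pm y / (1 - Cm y) + pp y / (1 - Cp y)) * l y = (1 - pD) / pD := by
      rw [← hleq]; simp_rw [add_comm]
    exact stmt_16_aux pD hpD pm pp hpm hpp hsum' Cm Cp hCm hCp l hl2 hleq'
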